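/- Let ν be a target policy over finite action set A with ν(x,a,r) = D(x)ν(a|x)D(r|x,a), let μ_k(x,a,r) = D(x)μ_k(a|x)D(r|x,a) be the exploration distribution at step k (conditioned on the history), let r*(x,a) = E_D[r|x,a], Δ(x,a) = r̂(x,a) − r*(x,a), and ρ_k(x,a) = μ_k(a|x)/μ̂_k(a|x). Then the conditional expectation of the doubly robust term V̂_k = Σ_{a'} ν(a'|x_k) r̂(x_k,a') + (ν(a_k|x_k)/μ̂_k(a_k|x_k))·(r_k − r̂(x_k,a_k)) with (x_k,a_k,r_k) ∼ μ_k equals E_{(x,a)∼ν}[ r*(x,a) + (1 − ρ_k(x,a))·Δ(x,a) ]. -/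
import Mathlib


open Finset

/-- Expectation of the doubly robust term:
`E_{μ_k}[V̂_k] = E_{(x,a)∼ν}[ r*(x,a) + (1 − ρ_k(x,a))·Δ(x,a) ]`. -/
theorem stmt1 {X A R : Type*} [Fintype X] [Fintype A] [Fintype R]
    (D : X → ℝ) (nu : X → A → ℝ) (mu : X → A → ℝ)
    (Dr : X → A → R → ℝ) (rval : R → ℝ)
    (rhat : X → A → ℝ) (muhat : X → A → ℝ)
    (hD0 : ∀ x, 0 ≤ D x) (hD1 : ∑ x, D x = 1)
    (hnu0 : ∀ x a, 0 ≤ nu x a) (hnu1 : ∀ x, ∑ a, nu x a = 1)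
    (hmu0 : ∀ x a, 0 ≤ mu x a) (hmu1 : ∀ x, ∑ a, mu x a = 1)
    (hDr0 : ∀ x a r, 0 ≤ Dr x a r) (hDr1 : ∀ x a, ∑ r, Dr x a r = 1)
    (hrval0 : ∀ r, 0 ≤ rval r) (hrval1 : ∀ r, rval r ≤ 1)
    (hrhat0 : ∀ x a, 0 ≤ rhat x a) (hrhat1 : ∀ x a, rhat x a ≤ 1)
    (hmuhat : ∀ x a, 0 < muhat x a)
    (hpos : ∀ x a, 0 < nu x a → 0 < mu x a)
    (rstar : X → A → ℝ) (hrstar : ∀ x a, rstar x a = ∑ r, Dr x a r * rval r)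
    (Δ : X → A → ℝ) (hΔ : ∀ x a, Δ x a = rhat x a - rstar x a)
    (ρ : X → A → ℝ) (hρ : ∀ x a, ρ x a = mu x a / muhat x a)
    (Vhat : X → A → R → ℝ)
    (hVhat : ∀ x a r, Vhat x a r =
      (∑ a', nu x a' * rhat x a') + (nu x a / muhat x a) * (rval r - rhat x a)) :
    ∑ x, ∑ a, ∑ r, D x * (mu x a * (Dr x a r * Vhat x a r))
      = ∑ x, ∑ a, D x * (nu x a * (rstar x a + (1 - ρ x a) * Δ x a)) := by
  apply Finset.sum_congr rfl
  intro x _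
  set S := ∑ a', nu x a' * rhat x a' with hS
  have hinner : ∀ a, ∑ r, D x * (mu x a * (Dr x a r * Vhat x a r))
      = D x * mu x a * S
        + D x * (mu x a * nu x a / muhat x a) * (rstar x a - rhat x a) := by
    intro a
    have e1 : ∀ r, D x * (mu x a * (Dr x a r * Vhat x a r))
        = (D x * mu x a * S) * Dr x a r
          + (D x * (mu x a * nu x a / muhat x a)) * (Dr x a r * rval r)
          - (D x * (mu x a * nu x a / muhat x a) * rhat x a) * Dr x a r := by
      intro r; rw [hVhat]; ring
    simp only [e1]
    rw [Finset.sum_sub_distrib, Finset.sum_add_distrib, ← Finset.mul_sum,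
      ← Finset.mul_sum, ← Finset.mul_sum, hDr1, ← hrstar]
    ring
  simp only [hinner]
  rw [Finset.sum_add_distrib]
  have e2 : ∀ a, D x * mu x a * S = D x * S * mu x a := by intro a; ring
  simp only [e2]
  rw [← Finset.mul_sum, hmu1, mul_one]
  have e3 : ∀ a, D x * (nu x a * (rstar x a + (1 - ρ x a) * Δ x a))
      = D x * (nu x a * rhat x a)
        + D x * (mu x a * nu x a / muhat x a) * (rstar x a - rhat x a) := by
    intro a; rw [hρ, hΔ]; ring
  simp only [e3]
  rw [Finset.sum_add_distrib, ← Finset.mul_sum, ← hS]
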